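/- (Splitting to create slack) Let D ⊆ [d], let δ ≤ 1/4, and let I be a finite set of items where each item i has weights v_j(i) ∈ [0,1] for j ∈ D, with v_j(I) := Σ_{i∈I} v_j(i) ≤ V_j for each j ∈ D. Then I can be partitioned into at most |D| + 1 subsets such that each subset I' satisfies either |I'| = 1 or v_j(I') ≤ (1−δ)V_j for all j ∈ D. -/

import Mathlib

lemma greedy_split {ι : Type*} [DecidableEq ι] {d : ℕ} (B : Finset (Fin d))
    (δ : ℝ) (hδ0 : 0 < δ) (hδ : δ ≤ 1/4)
    (v : Fin d → ι → ℝ) (V : Fin d → ℝ) (hV : ∀ j ∈ B, 0 < V j) :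
    ∀ S : Finset ι,
      (∀ j ∈ B, ∀ i ∈ S, 0 ≤ v j i) →
      (∀ j ∈ B, ∀ i ∈ S, v j i < δ * V j) →
      (∀ j ∈ B, ∑ i ∈ S, v j i ≤ V j) →
      ∃ P : Finset (Finset ι),
        (∀ T ∈ P, T ⊆ S) ∧
        (∀ i ∈ S, ∃ T ∈ P, i ∈ T) ∧
        ((P : Set (Finset ι)).PairwiseDisjoint id) ∧
        (∀ T ∈ P, ∀ j ∈ B, ∑ i ∈ T, v j i ≤ (1-δ) * V j) ∧
        P.card ≤ (B.filter (fun j => (1-2*δ) * V j < ∑ i ∈ S, v j i)).card + 1 := by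
  classical
  intro S
  induction S using Finset.strongInduction with
  | _ S IH =>
    intro h0 hsmall htot
    by_cases hlight : ∀ j ∈ B, ∑ i ∈ S, v j i ≤ (1-δ) * V j
    · refine ⟨{S}, ?_, ?_, ?_, ?_, ?_⟩
      · simp
      · intro i hi; exact ⟨S, by simp, hi⟩
      · simp [Set.pairwiseDisjoint_singleton]
      · intro T hT; simp at hT; subst hT; exact hlight
      · simp
    · push_neg at hlight
      obtain ⟨j₀, hj₀B, hj₀⟩ := hlight
      -- take a maximal light subset T of S
      set F : Finset (Finset ι) :=
        S.powerset.filter (fun T => ∀ j ∈ B, ∑ i ∈ T, v j i ≤ (1-δ) * V j) with hF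
      have hne : F.Nonempty := by
        refine ⟨∅, ?_⟩
        simp only [hF, Finset.mem_filter, Finset.mem_powerset]
        refine ⟨Finset.empty_subset _, ?_⟩
        intro j hj
        simp only [Finset.sum_empty]
        have := hV j hj
        nlinarith
      obtain ⟨T, hTF, hTmax⟩ : ∃ T ∈ F, ∀ x ∈ F, ¬ T < x := by
        obtain ⟨T, hT⟩ := Finset.exists_maximal hne
        exact ⟨T, hT.1, fun x hx hlt => hlt.not_ge (hT.2 hx hlt.le)⟩
      have hTS : T ⊆ S := by
        have := (Finset.mem_filter.1 hTF).1; exact Finset.mem_powerset.1 this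
      have hTlight : ∀ j ∈ B, ∑ i ∈ T, v j i ≤ (1-δ) * V j :=
        (Finset.mem_filter.1 hTF).2
      have hTne : T ≠ S := by
        rintro rfl
        exact absurd (hTlight j₀ hj₀B) (not_le.2 hj₀)
      obtain ⟨i₀, hi₀S, hi₀T⟩ : ∃ i₀ ∈ S, i₀ ∉ T := by
        by_contra h
        push_neg at h
        exact hTne (Finset.Subset.antisymm hTS h)
      have hins : insert i₀ T ∉ F := by
        intro hmem
        exact hTmax _ hmem (Finset.ssubset_insert hi₀T)
      obtain ⟨j₁, hj₁B, hj₁⟩ : ∃ j ∈ B, (1-δ) * V j < ∑ i ∈ insert i₀ T, v j i := by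
        by_contra h
        push_neg at h
        exact hins (by
          simp only [hF, Finset.mem_filter, Finset.mem_powerset]
          exact ⟨Finset.insert_subset hi₀S hTS, h⟩)
      have hsumins : ∑ i ∈ insert i₀ T, v j₁ i = v j₁ i₀ + ∑ i ∈ T, v j₁ i :=
        Finset.sum_insert hi₀T
      have hwit : (1-2*δ) * V j₁ < ∑ i ∈ T, v j₁ i := by
        have hs := hsmall j₁ hj₁B i₀ hi₀S
        rw [hsumins] at hj₁
        nlinarith [hV j₁ hj₁B]
      have hTnonempty : T.Nonempty := by
        rcases T.eq_empty_or_nonempty with rfl | h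
        · exfalso
          simp only [Finset.sum_empty] at hwit
          nlinarith [hV j₁ hj₁B]
        · exact h
      have hssub : S \ T ⊂ S := by
        obtain ⟨x, hx⟩ := hTnonempty
        refine Finset.ssubset_iff_of_subset (Finset.sdiff_subset) |>.2 ⟨x, hTS hx, by simp [hx]⟩
      obtain ⟨P', hP'sub, hP'cov, hP'dis, hP'light, hP'card⟩ :=
        IH (S \ T) hssub
          (fun j hj i hi => h0 j hj i (Finset.sdiff_subset hi))
          (fun j hj i hi => hsmall j hj i (Finset.sdiff_subset hi))
          (fun j hj => le_trans
            (Finset.sum_le_sum_of_subset_of_nonneg Finset.sdiff_subset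
              (fun i hi _ => h0 j hj i hi)) (htot j hj))
      have hTnotP' : T ∉ P' := by
        intro h
        obtain ⟨x, hx⟩ := hTnonempty
        have := hP'sub T h hx
        simp at this
        exact this.2 hx
      refine ⟨insert T P', ?_, ?_, ?_, ?_, ?_⟩
      · intro U hU
        rcases Finset.mem_insert.1 hU with rfl | hU
        · exact hTS
        · exact (hP'sub U hU).trans Finset.sdiff_subset
      · intro i hi
        by_cases h : i ∈ T
        · exact ⟨T, Finset.mem_insert_self _ _, h⟩
        · obtain ⟨U, hU, hiU⟩ := hP'cov i (Finset.mem_sdiff.2 ⟨hi, h⟩)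
          exact ⟨U, Finset.mem_insert_of_mem hU, hiU⟩
      · rw [Finset.coe_insert]
        refine hP'dis.insert ?_
        intro U hU _
        simp only [id]
        rw [Finset.disjoint_left]
        intro x hxT hxU
        have := hP'sub U hU hxU
        simp at this
        exact this.2 hxT
      · intro U hU j hj
        rcases Finset.mem_insert.1 hU with rfl | hU
        · exact hTlight j hj
        · exact hP'light U hU j hj
      · -- cardinality
        set W := B.filter (fun j => (1-2*δ) * V j < ∑ i ∈ S, v j i) with hW
        have hj₁W : j₁ ∈ W := by
          refine Finset.mem_filter.2 ⟨hj₁B, lt_of_lt_of_le hwit ?_⟩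
          exact Finset.sum_le_sum_of_subset_of_nonneg hTS (fun i hi _ => h0 j₁ hj₁B i hi)
        have hsplit : ∑ i ∈ (S \ T), v j₁ i + ∑ i ∈ T, v j₁ i = ∑ i ∈ S, v j₁ i :=
          Finset.sum_sdiff hTS
        have hmono : (B.filter (fun j => (1-2*δ) * V j < ∑ i ∈ (S \ T), v j i))
            ⊆ W.erase j₁ := by
          intro j hj
          simp only [Finset.mem_filter] at hj
          obtain ⟨hjB, hjlt⟩ := hj
          refine Finset.mem_erase.2 ⟨?_, Finset.mem_filter.2 ⟨hjB, lt_of_lt_of_le hjlt ?_⟩⟩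
          · rintro rfl
            have h1 : ∑ i ∈ (S \ T), v j i ≤ 2*δ * V j := by
              have := htot j hjB
              nlinarith
            nlinarith [hV j hjB]
          · exact Finset.sum_le_sum_of_subset_of_nonneg Finset.sdiff_subset
              (fun i hi _ => h0 j hjB i hi)
        have hcard1 : (B.filter (fun j => (1-2*δ) * V j < ∑ i ∈ (S \ T), v j i)).card
            ≤ W.card - 1 := by
          calc _ ≤ (W.erase j₁).card := Finset.card_le_card hmono
            _ = W.card - 1 := Finset.card_erase_of_mem hj₁W
        have hWpos : 1 ≤ W.card := Finset.card_pos.2 ⟨j₁, hj₁W⟩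
        calc (insert T P').card ≤ P'.card + 1 := Finset.card_insert_le _ _
          _ ≤ (W.card - 1) + 1 + 1 := by omega
          _ ≤ W.card + 1 := by omega
theorem stmt_9 {ι : Type*} [DecidableEq ι] (d : ℕ) (D : Finset (Fin d))
    (δ : ℝ) (hδ0 : 0 < δ) (hδ : δ ≤ 1/4)
    (I : Finset ι) (v : Fin d → ι → ℝ) (V : Fin d → ℝ)
    (hV : ∀ j ∈ D, 0 < V j)
    (hv : ∀ j ∈ D, ∀ i ∈ I, v j i ∈ Set.Icc (0:ℝ) 1)
    (htot : ∀ j ∈ D, ∑ i ∈ I, v j i ≤ V j) :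
    ∃ P : Finset (Finset ι),
      P.card ≤ D.card + 1 ∧
      (∀ S ∈ P, S ⊆ I) ∧
      (∀ i ∈ I, ∃ S ∈ P, i ∈ S) ∧
      ((P : Set (Finset ι)).PairwiseDisjoint id) ∧
      (∀ S ∈ P, S.card = 1 ∨ ∀ j ∈ D, ∑ i ∈ S, v j i ≤ (1 - δ) * V j) := by
  classical
  rcases I.eq_empty_or_nonempty with rfl | ⟨istar, histar⟩
  · exact ⟨∅, by simp, by simp, by simp, by simp, by simp⟩
  have h0 : ∀ j ∈ D, ∀ i ∈ I, 0 ≤ v j i := fun j hj i hi => (hv j hj i hi).1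
  -- B : dimensions where every item is small
  set B : Finset (Fin d) := D.filter (fun j => ∀ i ∈ I, v j i < δ * V j) with hB
  -- A : tight dimensions possessing a heavy item
  set A : Finset (Fin d) := D.filter
    (fun j => (1-δ) * V j < ∑ i ∈ I, v j i ∧ ∃ i ∈ I, δ * V j ≤ v j i) with hA
  have hAB : Disjoint A B := by
    rw [Finset.disjoint_left]
    intro j hjA hjB
    obtain ⟨_, ⟨i, hiI, hheavy⟩⟩ := (Finset.mem_filter.1 hjA).2
    exact absurd ((Finset.mem_filter.1 hjB).2 i hiI) (not_lt.2 hheavy)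
  -- choice of heavy item
  set f : Fin d → ι := fun j =>
    if h : ∃ i ∈ I, δ * V j ≤ v j i then h.choose else istar with hf
  have hfI : ∀ j, f j ∈ I := by
    intro j
    simp only [hf]
    split
    · next h => exact h.choose_spec.1
    · exact histar
  have hfheavy : ∀ j ∈ A, δ * V j ≤ v j (f j) := by
    intro j hj
    obtain ⟨_, hex⟩ := (Finset.mem_filter.1 hj).2
    simp only [hf, dif_pos hex]
    exact hex.choose_spec.2
  set R : Finset ι := A.image f with hR
  have hRI : R ⊆ I := by
    intro r hr
    obtain ⟨j, _, rfl⟩ := Finset.mem_image.1 hr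
    exact hfI j
  -- key: on dimensions outside B, the remainder I \ R is light
  have hkey : ∀ j ∈ D, j ∉ B → ∑ i ∈ I \ R, v j i ≤ (1-δ) * V j := by
    intro j hjD hjB
    have hex : ∃ i ∈ I, δ * V j ≤ v j i := by
      simp only [hB, Finset.mem_filter, hjD, true_and, not_forall, not_lt] at hjB
      obtain ⟨i, hi, h⟩ := hjB
      exact ⟨i, hi, h⟩
    by_cases htight : (1-δ) * V j < ∑ i ∈ I, v j i
    · have hjA : j ∈ A := Finset.mem_filter.2 ⟨hjD, htight, hex⟩
      have hfR : f j ∈ R := Finset.mem_image_of_mem f hjA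
      have hsub : I \ R ⊆ I.erase (f j) := by
        intro x hx
        rw [Finset.mem_sdiff] at hx
        exact Finset.mem_erase.2 ⟨fun h => hx.2 (h ▸ hfR), hx.1⟩
      calc ∑ i ∈ I \ R, v j i ≤ ∑ i ∈ I.erase (f j), v j i :=
            Finset.sum_le_sum_of_subset_of_nonneg hsub
              (fun i hi _ => h0 j hjD i (Finset.erase_subset _ _ hi))
        _ = ∑ i ∈ I, v j i - v j (f j) := Finset.sum_erase_eq_sub (hfI j)
        _ ≤ V j - δ * V j := by
            have := htot j hjD
            have := hfheavy j hjA
            linarith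
        _ = (1-δ) * V j := by ring
    · push_neg at htight
      calc ∑ i ∈ I \ R, v j i ≤ ∑ i ∈ I, v j i :=
            Finset.sum_le_sum_of_subset_of_nonneg Finset.sdiff_subset
              (fun i hi _ => h0 j hjD i hi)
        _ ≤ (1-δ) * V j := htight
  have hBD : B ⊆ D := Finset.filter_subset _ _
  obtain ⟨P', hP'sub, hP'cov, hP'dis, hP'light, hP'card⟩ :=
    greedy_split B δ hδ0 hδ v V (fun j hj => hV j (hBD hj)) (I \ R)
      (fun j hj i hi => h0 j (hBD hj) i (Finset.sdiff_subset hi))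
      (fun j hj i hi => (Finset.mem_filter.1 hj).2 i (Finset.sdiff_subset hi))
      (fun j hj => le_trans
        (Finset.sum_le_sum_of_subset_of_nonneg Finset.sdiff_subset
          (fun i hi _ => h0 j (hBD hj) i hi)) (htot j (hBD hj)))
  refine ⟨P' ∪ R.image (fun r => {r}), ?_, ?_, ?_, ?_, ?_⟩
  · -- cardinality
    have h1 : P'.card ≤ B.card + 1 := by
      refine hP'card.trans ?_
      have := Finset.card_le_card (Finset.filter_subset
        (fun j => (1-2*δ) * V j < ∑ i ∈ I \ R, v j i) B)
      omega
    have h2 : (R.image (fun r => ({r} : Finset ι))).card ≤ A.card :=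
      (Finset.card_image_le).trans ((Finset.card_image_le))
    have h3 : A.card + B.card ≤ D.card := by
      rw [← Finset.card_union_of_disjoint hAB]
      exact Finset.card_le_card (Finset.union_subset (Finset.filter_subset _ _) hBD)
    calc (P' ∪ R.image (fun r => {r})).card
        ≤ P'.card + (R.image (fun r => ({r} : Finset ι))).card := Finset.card_union_le _ _
      _ ≤ D.card + 1 := by omega
  · -- subsets of I
    intro S hS
    rcases Finset.mem_union.1 hS with h | h
    · exact (hP'sub S h).trans Finset.sdiff_subset
    · obtain ⟨r, hr, rfl⟩ := Finset.mem_image.1 h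
      simpa using hRI hr
  · -- cover
    intro i hi
    by_cases h : i ∈ R
    · exact ⟨{i}, Finset.mem_union_right _ (Finset.mem_image_of_mem _ h),
        Finset.mem_singleton_self i⟩
    · obtain ⟨T, hT, hiT⟩ := hP'cov i (Finset.mem_sdiff.2 ⟨hi, h⟩)
      exact ⟨T, Finset.mem_union_left _ hT, hiT⟩
  · -- pairwise disjoint
    intro X hX Y hY hXY
    simp only [Finset.coe_union, Set.mem_union, Finset.mem_coe] at hX hY
    have hsing : ∀ Z ∈ R.image (fun r => ({r} : Finset ι)), ∀ W ∈ P',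
        Disjoint Z W := by
      intro Z hZ W hW
      obtain ⟨r, hr, rfl⟩ := Finset.mem_image.1 hZ
      rw [Finset.disjoint_left]
      intro x hx hxW
      rw [Finset.mem_singleton] at hx
      subst hx
      have := hP'sub W hW hxW
      exact (Finset.mem_sdiff.1 this).2 hr
    rcases hX with hX | hX <;> rcases hY with hY | hY
    · exact hP'dis hX hY hXY
    · exact (hsing _ hY _ hX).symm
    · exact hsing _ hX _ hY
    · obtain ⟨r, _, rfl⟩ := Finset.mem_image.1 hX
      obtain ⟨r', _, rfl⟩ := Finset.mem_image.1 hY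
      show Disjoint ({r} : Finset ι) {r'}
      rw [Finset.disjoint_left]
      intro x hx hx'
      rw [Finset.mem_singleton] at hx hx'
      exact hXY (congrArg (fun a => ({a} : Finset ι)) (hx.symm.trans hx'))
  · -- each part singleton or light
    intro S hS
    rcases Finset.mem_union.1 hS with h | h
    · right
      intro j hj
      by_cases hjB : j ∈ B
      · exact hP'light S h j hjB
      · calc ∑ i ∈ S, v j i ≤ ∑ i ∈ I \ R, v j i :=
              Finset.sum_le_sum_of_subset_of_nonneg (hP'sub S h)
                (fun i hi _ => h0 j hj i (Finset.sdiff_subset hi))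
          _ ≤ (1-δ) * V j := hkey j hj hjB
    · left
      obtain ⟨r, _, rfl⟩ := Finset.mem_image.1 h
      exact Finset.card_singleton r
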